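/- For every natural number n ≥ 1, the sum over j from 1 to n of 2^j·J_{n-j} equals (2/3)·(n·J_{n-1} + (n-1)·J_n); equivalently, 3·∑_{j=1}^{n} 2^j·J_{n-j} = 2·(n·J_{n-1} + (n-1)·J_n). -/

import Mathlib

def J : ℕ → ℤ
  | 0 => 0
  | 1 => 1
  | (n+2) => J (n+1) + 2 * J n

lemma J_shift (m : ℕ) :
    ∑ j ∈ Finset.Icc 1 (m+1), 2 ^ j * J (m+1-j) =
      2 * J m + 2 * ∑ j ∈ Finset.Icc 1 m, 2 ^ j * J (m-j) := by
  rw [← Finset.Ico_add_one_right_eq_Icc, ← Finset.Ico_add_one_right_eq_Icc,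
    Finset.sum_Ico_eq_sum_range, Finset.sum_Ico_eq_sum_range]
  have e1 : m + 1 + 1 - 1 = m + 1 := by omega
  have e2 : m + 1 - 1 = m := by omega
  rw [e1, e2, Finset.sum_range_succ', add_comm, Finset.mul_sum]
  congr 1
  apply Finset.sum_congr rfl
  intro i _
  have h : m + 1 - (1 + (i + 1)) = m - (1 + i) := by omega
  rw [h]
  ring

theorem jacobsthal_power_sum (n : ℕ) (hn : 1 ≤ n) :
    3 * ∑ j ∈ Finset.Icc 1 n, 2 ^ j * J (n - j) =
      2 * ((n : ℤ) * J (n-1) + ((n : ℤ) - 1) * J n) := by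
  induction n, hn using Nat.le_induction with
  | base => simp [J]
  | succ n hn ih =>
    rw [J_shift]
    obtain ⟨m, rfl⟩ := Nat.exists_eq_add_of_le hn
    have hrec : J (1 + m + 1) = J (1 + m) + 2 * J m := by
      have : 1 + m + 1 = m + 2 := by omega
      rw [this, J]
      have ha : m + 1 = 1 + m := by omega
      rw [ha]
    have h1 : 1 + m - 1 = m := by omega
    rw [h1] at ih
    have h2 : 1 + m + 1 - 1 = 1 + m := by omega
    rw [h2]
    push_cast at ih ⊢
    rw [hrec]
    linarith
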